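/- arXiv:2312.03553 — 2 statements merged into one kernel-verified Lean document; each statement's English description precedes it below -/
import Mathlib

section
/- Let f : [0,∞) → [0,∞) be Lipschitz continuous and suppose there are constants C₀, C₁ > 0, exponents α, β, γ with 0 ≤ β < α, γ ≥ 0 and α + β < 2, such that f'(t) ≤ C₀(1+t)^{-α} (wherever f is differentiable) and ∫₀ᵗ f(s) ds ≤ C₁(1+t)^{β} ln^{γ}(1+t) for all t ≥ 0. Then for all sufficiently large t, f(t) ≤ 2√(C₀C₁) (1+t)^{(β-α)/2} ln^{γ/2}(1+t). -/
open MeasureTheory Real Filter Set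

/-- The averaged integral of a Lipschitz function over a shrinking right interval tends
to the value of the function. -/
lemma aux_tendsto_avg (f : ℝ → ℝ) (K : NNReal) (hf : LipschitzWith K f) (c : ℝ) :
    Tendsto (fun n : ℕ => (∫ x in c..(c + 1/(n+1)), f x) * (n+1)) atTop (nhds (f c)) := by
  rw [← tendsto_sub_nhds_zero_iff]
  have hKlim : Tendsto (fun n : ℕ => (K:ℝ) * (1/(n+1))) atTop (nhds 0) := by
    simpa using tendsto_one_div_add_atTop_nhds_zero_nat.const_mul (K:ℝ)
  apply squeeze_zero_norm _ hKlim
  intro n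
  have hne : ((n:ℝ)+1) ≠ 0 := by positivity
  have hδ : (0:ℝ) < 1/(n+1) := by positivity
  have key : (∫ x in c..(c + 1/(n+1)), f x) * (n+1) - f c
      = (∫ x in c..(c + 1/(n+1)), (f x - f c)) * (n+1) := by
    rw [intervalIntegral.integral_sub (hf.continuous.intervalIntegrable _ _)
      intervalIntegrable_const, intervalIntegral.integral_const]
    simp only [add_sub_cancel_left, smul_eq_mul]
    field_simp
  rw [key]
  have hbd : ∀ x ∈ Set.uIoc c (c + 1/(n+1)), ‖f x - f c‖ ≤ (K:ℝ) * (1/(n+1)) := by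
    intro x hx
    have h1 : c ≤ c + 1/(n+1) := by linarith
    rw [Set.uIoc_of_le h1] at hx
    have : dist (f x) (f c) ≤ (K:ℝ) * dist x c := hf.dist_le_mul x c
    rw [Real.dist_eq, Real.dist_eq] at this
    have h2 : |x - c| ≤ 1/(n+1) := by
      rw [abs_le]; constructor <;> [linarith [hx.1]; linarith [hx.2]]
    calc ‖f x - f c‖ = |f x - f c| := rfl
      _ ≤ (K:ℝ) * |x - c| := this
      _ ≤ (K:ℝ) * (1/(n+1)) := by
          exact mul_le_mul_of_nonneg_left h2 (by positivity)
  have h3 := intervalIntegral.norm_integral_le_of_norm_le_const hbd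
  calc ‖(∫ x in c..(c + 1/(n+1)), (f x - f c)) * (n+1)‖
      = ‖∫ x in c..(c + 1/(n+1)), (f x - f c)‖ * ((n:ℝ)+1) := by
        rw [norm_mul]
        congr 1
        simp [abs_of_pos]
        positivity
    _ ≤ ((K:ℝ) * (1/(n+1)) * |c + 1/(n+1) - c|) * ((n:ℝ)+1) := by
        apply mul_le_mul_of_nonneg_right h3 (by positivity)
    _ = (K:ℝ) * (1/(n+1)) := by
        rw [add_sub_cancel_left, abs_of_pos hδ]
        field_simp

/-- Fundamental theorem of calculus for Lipschitz functions (with the junk-value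
convention for `deriv` at points of non-differentiability). -/
lemma aux_lipschitz_ftc (f : ℝ → ℝ) (K : NNReal) (hf : LipschitzWith K f) {a b : ℝ}
    (hab : a ≤ b) : f b - f a = ∫ x in a..b, deriv f x := by
  have hcont : Continuous f := hf.continuous
  have hii : ∀ u v : ℝ, IntervalIntegrable f volume u v :=
    fun u v => hcont.intervalIntegrable u v
  set F : ℕ → ℝ → ℝ := fun n x => (f (x + 1/(n+1)) - f x) * (n+1) with hF
  -- Step A: the integrals of the difference quotients converge to `f b - f a`.
  have eqn : ∀ n : ℕ, (∫ x in a..b, F n x)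
      = (∫ x in b..(b + 1/(n+1)), f x) * (n+1) - (∫ x in a..(a + 1/(n+1)), f x) * (n+1) := by
    intro n
    have hs : Continuous (fun x : ℝ => f (x + 1/(n+1))) :=
      hcont.comp (continuous_add_right _)
    have h1 : (∫ x in a..b, (f (x + 1/(n+1)) - f x))
        = (∫ x in a..b, f (x + 1/(n+1))) - ∫ x in a..b, f x :=
      intervalIntegral.integral_sub (hs.intervalIntegrable _ _) (hii _ _)
    have h2 : (∫ x in a..b, f (x + 1/(n+1)))
        = ∫ x in (a + 1/(n+1))..(b + 1/(n+1)), f x :=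
      intervalIntegral.integral_comp_add_right f _
    have A1 : (∫ x in a..(a + 1/(n+1)), f x) + (∫ x in (a + 1/(n+1))..(b + 1/(n+1)), f x)
        = ∫ x in a..(b + 1/(n+1)), f x :=
      intervalIntegral.integral_add_adjacent_intervals (hii _ _) (hii _ _)
    have A2 : (∫ x in a..b, f x) + (∫ x in b..(b + 1/(n+1)), f x)
        = ∫ x in a..(b + 1/(n+1)), f x :=
      intervalIntegral.integral_add_adjacent_intervals (hii _ _) (hii _ _)
    have h3 : (∫ x in a..b, F n x) = (∫ x in a..b, (f (x + 1/(n+1)) - f x)) * (n+1) :=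
      intervalIntegral.integral_mul_const _ _
    rw [h3, h1, h2]
    linear_combination ((n:ℝ)+1) * A1 - ((n:ℝ)+1) * A2
  have stepA : Tendsto (fun n : ℕ => ∫ x in a..b, F n x) atTop (nhds (f b - f a)) := by
    have := (aux_tendsto_avg f K hf b).sub (aux_tendsto_avg f K hf a)
    exact this.congr (fun n => (eqn n).symm)
  -- Step B: by dominated convergence they converge to the integral of the derivative.
  have stepB : Tendsto (fun n : ℕ => ∫ x in a..b, F n x)
      atTop (nhds (∫ x in a..b, deriv f x)) := by
    simp only [intervalIntegral.integral_of_le hab]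
    apply MeasureTheory.tendsto_integral_of_dominated_convergence (fun _ => (K:ℝ))
    · intro n
      exact (((hcont.comp (continuous_add_right _)).sub hcont).mul
        continuous_const).aestronglyMeasurable
    · exact integrableOn_const measure_Ioc_lt_top.ne
    · intro n
      apply Eventually.of_forall
      intro x
      have hd : dist (f (x + 1/(n+1))) (f x) ≤ (K:ℝ) * dist (x + 1/(n+1)) x :=
        hf.dist_le_mul _ _
      rw [Real.dist_eq, Real.dist_eq, add_sub_cancel_left] at hd
      have hδ : (0:ℝ) < 1/(n+1) := by positivity
      rw [abs_of_pos hδ] at hd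
      have : ‖F n x‖ = |f (x + 1/(n+1)) - f x| * ((n:ℝ)+1) := by
        rw [hF]
        simp only [norm_mul, Real.norm_eq_abs]
        congr 1
        rw [abs_of_pos (by positivity)]
      rw [this]
      calc |f (x + 1/(n+1)) - f x| * ((n:ℝ)+1) ≤ ((K:ℝ) * (1/(n+1))) * ((n:ℝ)+1) :=
            mul_le_mul_of_nonneg_right hd (by positivity)
        _ = (K:ℝ) := by field_simp
    · apply ae_restrict_of_ae
      filter_upwards [hf.ae_differentiableAt] with x hx
      have hda := hx.hasDerivAt
      rw [hasDerivAt_iff_tendsto_slope] at hda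
      have hseq : Tendsto (fun n : ℕ => x + 1/(n+1)) atTop (nhdsWithin x {x}ᶜ) := by
        apply tendsto_nhdsWithin_of_tendsto_nhds_of_eventually_within
        · simpa using (tendsto_const_nhds : Tendsto (fun _ : ℕ => x) atTop (nhds x)).add tendsto_one_div_add_atTop_nhds_zero_nat
        · apply Eventually.of_forall
          intro n
          simp only [mem_compl_iff, mem_singleton_iff]
          have : (0:ℝ) < 1/(n+1) := by positivity
          intro h
          nlinarith [h]
      have := hda.comp hseq
      apply this.congr
      intro n
      have hne : ((n:ℝ)+1) ≠ 0 := by positivity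
      simp only [Function.comp_apply, slope_def_field, hF, add_sub_cancel_left, one_div]
      rw [div_eq_mul_inv, inv_inv]
  exact tendsto_nhds_unique stepA stepB

/-- Increment bound for a Lipschitz function whose derivative (where it exists)
is bounded above by `c` on `(a, b]`. -/
lemma aux_lipschitz_incr (f : ℝ → ℝ) (K : NNReal) (hf : LipschitzWith K f) {a b c : ℝ}
    (hab : a ≤ b) (hc : 0 ≤ c)
    (hd : ∀ u ∈ Set.Ioc a b, ∀ d : ℝ, HasDerivAt f d u → d ≤ c) :
    f b - f a ≤ c * (b - a) := by
  rw [aux_lipschitz_ftc f K hf hab]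
  have hbd : ∀ x : ℝ, |deriv f x| ≤ (K:ℝ) := fun x => norm_deriv_le_of_lipschitz hf
  have hInt : IntegrableOn (deriv f) (Set.Ioc a b) := by
    constructor
    · exact (measurable_deriv f).aestronglyMeasurable
    · have : IsFiniteMeasure (volume.restrict (Set.Ioc a b)) :=
        ⟨by rw [Measure.restrict_apply_univ]; exact measure_Ioc_lt_top⟩
      exact HasFiniteIntegral.of_bounded (C := (K:ℝ)) (Eventually.of_forall hbd)
  have hder_le : ∀ x ∈ Set.Ioc a b, deriv f x ≤ c := by
    intro x hx
    by_cases hdiff : DifferentiableAt ℝ f x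
    · exact hd x hx (deriv f x) hdiff.hasDerivAt
    · rw [deriv_zero_of_not_differentiableAt hdiff]; exact hc
  rw [intervalIntegral.integral_of_le hab]
  calc (∫ x in Set.Ioc a b, deriv f x)
      ≤ ∫ _x in Set.Ioc a b, c :=
        setIntegral_mono_on hInt (integrableOn_const measure_Ioc_lt_top.ne)
          measurableSet_Ioc hder_le
    _ = c * (b - a) := by
        rw [setIntegral_const, Real.volume_real_Ioc_of_le hab, smul_eq_mul]
        ring

set_option maxHeartbeats 1000000 in
/-- Area inequality (Deng–Huang–Su): a nonnegative Lipschitz function with a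
one-sided derivative bound `f'(t) ≤ C₀(1+t)^{-α}` and an integrated bound
`∫₀ᵗ f ≤ C₁(1+t)^β ln^γ(1+t)` satisfies
`f(t) ≤ 2√(C₀C₁)(1+t)^{(β-α)/2} ln^{γ/2}(1+t)` for large `t`. -/
theorem area_inequality
    (f : ℝ → ℝ) (K : NNReal) (C₀ C₁ α β γ : ℝ)
    (hf_lip : LipschitzOnWith K f (Set.Ici 0))
    (hf_nonneg : ∀ t : ℝ, 0 ≤ t → 0 ≤ f t)
    (hC₀ : 0 < C₀) (hC₁ : 0 < C₁)
    (hβ : 0 ≤ β) (hβα : β < α) (hγ : 0 ≤ γ) (hαβ : α + β < 2)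
    (hderiv : ∀ t : ℝ, 0 ≤ t → ∀ d : ℝ, HasDerivAt f d t → d ≤ C₀ * (1 + t) ^ (-α))
    (hint : ∀ t : ℝ, 0 ≤ t →
      (∫ s in (0:ℝ)..t, f s) ≤ C₁ * (1 + t) ^ β * (Real.log (1 + t)) ^ γ) :
    ∃ T : ℝ, ∀ t ≥ T,
      f t ≤ 2 * Real.sqrt (C₀ * C₁) * (1 + t) ^ ((β - α) / 2) *
        (Real.log (1 + t)) ^ (γ / 2) := by
  have hα : 0 < α := lt_of_le_of_lt hβ hβα
  obtain ⟨g, hg_lip, hgf⟩ := hf_lip.extend_real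
  -- the constant δ
  set δ : ℝ := 1 - (2:ℝ) ^ (-1/α) with hδdef
  have hpow_lt : (2:ℝ) ^ (-1/α) < 1 :=
    Real.rpow_lt_one_of_one_lt_of_neg one_lt_two (div_neg_of_neg_of_pos (by norm_num) hα)
  have hpow_pos : 0 < (2:ℝ) ^ (-1/α) := Real.rpow_pos_of_pos two_pos _
  have hδ0 : 0 < δ := by simp only [hδdef]; linarith
  have hδ1 : δ < 1 := by simp only [hδdef]; linarith
  have hδd : (1 - δ : ℝ) ^ (-α) = 2 := by
    have h1 : (1 - δ : ℝ) = (2:ℝ) ^ (-1/α) := by rw [hδdef]; ring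
    rw [h1, ← Real.rpow_mul (by norm_num : (0:ℝ) ≤ 2)]
    have : (-1/α) * (-α) = 1 := by field_simp
    rw [this, Real.rpow_one]
  -- the eventual bound from the little-o estimate
  have hs : 0 < 2 - α - β := by linarith
  have hlo := (isLittleO_log_rpow_rpow_atTop γ hs).def
    (show (0:ℝ) < C₀ * δ^2 / C₁ by positivity)
  have hcomp : Tendsto (fun t : ℝ => 1 + t) atTop atTop :=
    tendsto_atTop_add_const_left atTop 1 tendsto_id
  obtain ⟨T, hT⟩ := Filter.eventually_atTop.1
    ((hcomp.eventually hlo).and (eventually_ge_atTop (max 1 (δ/(1-δ)))))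
  refine ⟨T, fun t htT => ?_⟩
  obtain ⟨hnorm, hmax⟩ := hT t htT
  have ht1 : 1 ≤ t := le_trans (le_max_left _ _) hmax
  have htδ : δ/(1-δ) ≤ t := le_trans (le_max_right _ _) hmax
  have ht0 : (0:ℝ) < 1 + t := by linarith
  have ht0' : (0:ℝ) ≤ t := by linarith
  have hL0 : 0 < Real.log (1 + t) := Real.log_pos (by linarith)
  -- the eventual bound in usable form
  have h1t : C₁ * (1+t)^β * (Real.log (1+t))^γ ≤ C₀ * δ^2 * (1+t)^(2-α) := by
    have h1 : |Real.log (1+t) ^ γ| = Real.log (1+t) ^ γ :=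
      abs_of_nonneg (Real.rpow_nonneg hL0.le _)
    have h2 : |(1+t) ^ (2-α-β)| = (1+t) ^ (2-α-β) :=
      abs_of_nonneg (Real.rpow_nonneg ht0.le _)
    simp only [Real.norm_eq_abs] at hnorm
    rw [h1, h2] at hnorm
    have h3 : C₁ * (1+t)^β * (Real.log (1+t))^γ
        ≤ C₁ * (1+t)^β * (C₀ * δ^2 / C₁ * (1+t)^(2-α-β)) := by
      apply mul_le_mul_of_nonneg_left hnorm (by positivity)
    calc C₁ * (1+t)^β * (Real.log (1+t))^γ
        ≤ C₁ * (1+t)^β * (C₀ * δ^2 / C₁ * (1+t)^(2-α-β)) := h3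
      _ = C₀ * δ^2 * ((1+t)^β * (1+t)^(2-α-β)) := by field_simp
      _ = C₀ * δ^2 * (1+t)^(2-α) := by
          rw [← Real.rpow_add ht0]; ring_nf
  -- the key estimate
  have key : ∀ h : ℝ, 0 ≤ h → h ≤ δ * (1+t) →
      h * f t ≤ C₁ * (1+t)^β * (Real.log (1+t))^γ + C₀ * (1+t)^(-α) * h^2 := by
    intro h h0 hle
    set a : ℝ := t - h with ha
    have hδt : δ * (1+t) ≤ t := by
      have h1 : δ ≤ (1-δ) * t := by
        rw [div_le_iff₀ (by linarith : (0:ℝ) < 1 - δ)] at htδ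
        linarith
      nlinarith
    have ha0 : 0 ≤ a := by rw [ha]; linarith
    have hat : a ≤ t := by rw [ha]; linarith
    have h1a : (0:ℝ) < 1 + a := by linarith
    set c : ℝ := C₀ * (1+a)^(-α) with hc
    have hc0 : 0 ≤ c := by positivity
    -- lower bound for g on [a, t]
    have hlow : ∀ s ∈ Set.Icc a t, g t - c * (t - s) ≤ g s := by
      intro s hs
      have hd : ∀ u ∈ Set.Ioc s t, ∀ d : ℝ, HasDerivAt g d u → d ≤ c := by
        intro u hu d hdu
        have hu0 : 0 < u := lt_of_le_of_lt (le_trans ha0 hs.1) hu.1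
        have heq : f =ᶠ[nhds u] g :=
          Filter.eventually_of_mem (Ioi_mem_nhds hu0) (fun x hx => hgf (Set.mem_Ici.mpr (le_of_lt hx)))
        have hfd : HasDerivAt f d u := heq.hasDerivAt_iff.mpr hdu
        have hb := hderiv u hu0.le d hfd
        have hmon : (1+u)^(-α) ≤ (1+a)^(-α) :=
          Real.rpow_le_rpow_of_nonpos h1a (by linarith [hu.1, hs.1]) (by linarith)
        calc d ≤ C₀ * (1+u)^(-α) := hb
          _ ≤ C₀ * (1+a)^(-α) := mul_le_mul_of_nonneg_left hmon hC₀.le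
          _ = c := hc.symm
      have := aux_lipschitz_incr g K hg_lip hs.2 hc0 hd
      linarith
    have hgInt : ∀ u v : ℝ, IntervalIntegrable g volume u v :=
      fun u v => hg_lip.continuous.intervalIntegrable u v
    have hcont2 : Continuous (fun s : ℝ => c * (t - s)) :=
      continuous_const.mul (continuous_const.sub continuous_id)
    have hcont3 : Continuous (fun s : ℝ => g t - c * (t - s)) :=
      continuous_const.sub hcont2
    have hlowInt : IntervalIntegrable (fun s => g t - c * (t - s)) volume a t :=
      hcont3.intervalIntegrable _ _
    have hI1 : (∫ s in a..t, (g t - c * (t - s))) ≤ ∫ s in a..t, g s :=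
      intervalIntegral.integral_mono_on hat hlowInt (hgInt a t) hlow
    have hI2 : (∫ s in a..t, (g t - c * (t - s))) = h * g t - c * h^2/2 := by
      rw [intervalIntegral.integral_sub intervalIntegrable_const
        (hcont2.intervalIntegrable _ _)]
      rw [intervalIntegral.integral_const]
      have h4 : (∫ s in a..t, c * (t - s)) = c * ((t-a)^2/2) := by
        rw [intervalIntegral.integral_const_mul]
        have h5 : (∫ s in a..t, (t - s)) = ∫ x in (t-t)..(t-a), x :=
          intervalIntegral.integral_comp_sub_left (fun x => x) t
        rw [h5, integral_id]
        ring
      rw [h4, ha]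
      simp only [smul_eq_mul]
      ring
    have hI3 : (∫ s in a..t, g s) ≤ C₁ * (1+t)^β * (Real.log (1+t))^γ := by
      have hsplit : (∫ s in (0:ℝ)..a, g s) + (∫ s in a..t, g s) = ∫ s in (0:ℝ)..t, g s :=
        intervalIntegral.integral_add_adjacent_intervals (hgInt _ _) (hgInt _ _)
      have hpos : 0 ≤ ∫ s in (0:ℝ)..a, g s := by
        apply intervalIntegral.integral_nonneg ha0
        intro u hu
        rw [← hgf hu.1]
        exact hf_nonneg u hu.1
      have hft : (∫ s in (0:ℝ)..t, g s) = ∫ s in (0:ℝ)..t, f s := by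
        apply intervalIntegral.integral_congr
        intro x hx
        rw [Set.uIcc_of_le ht0'] at hx
        exact (hgf hx.1).symm
      have := hint t ht0'
      linarith
    -- bound on c
    have hcb : c ≤ 2 * C₀ * (1+t)^(-α) := by
      have hb1 : (1-δ) * (1+t) ≤ 1 + a := by rw [ha]; nlinarith
      have hb2 : (0:ℝ) < (1-δ) * (1+t) := mul_pos (by linarith) ht0
      have hb3 : (1+a)^(-α) ≤ ((1-δ) * (1+t))^(-α) :=
        Real.rpow_le_rpow_of_nonpos hb2 hb1 (by linarith)
      have hb4 : ((1-δ) * (1+t))^(-α) = 2 * (1+t)^(-α) := by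
        rw [Real.mul_rpow (by linarith : (0:ℝ) ≤ 1-δ) ht0.le, hδd]
      calc c = C₀ * (1+a)^(-α) := hc
        _ ≤ C₀ * (((1-δ) * (1+t))^(-α)) := mul_le_mul_of_nonneg_left hb3 hC₀.le
        _ = 2 * C₀ * (1+t)^(-α) := by rw [hb4]; ring
    have hgt : g t = f t := (hgf ht0').symm
    rw [hgt] at hI1 hI2
    have hch : c * h^2 ≤ 2 * C₀ * (1+t)^(-α) * h^2 :=
      mul_le_mul_of_nonneg_right hcb (sq_nonneg h)
    linarith
  -- case analysis
  by_cases hcase : f t ≤ 2 * C₀ * δ * (1+t)^(1-α)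
  · -- main case: use the optimal interval length
    set P : ℝ := (1+t)^α with hP
    have hPpos : 0 < P := Real.rpow_pos_of_pos ht0 _
    set h : ℝ := f t * P / (2*C₀) with hh
    have hft0 : 0 ≤ f t := hf_nonneg t ht0'
    have h0 : 0 ≤ h := by positivity
    have hle : h ≤ δ * (1+t) := by
      have h1 : h ≤ (2 * C₀ * δ * (1+t)^(1-α)) * P / (2*C₀) := by
        rw [hh]
        apply div_le_div_of_nonneg_right _ (by positivity)
        exact mul_le_mul_of_nonneg_right hcase hPpos.le
      have h2 : (2 * C₀ * δ * (1+t)^(1-α)) * P / (2*C₀) = δ * ((1+t)^(1-α) * (1+t)^α) := by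
        field_simp
        ring
      have h3 : (1+t)^(1-α) * (1+t)^α = 1 + t := by
        rw [← Real.rpow_add ht0]
        norm_num
      rw [h2, h3] at h1
      exact h1
    have hkey := key h h0 hle
    have hPinv : (1+t)^(-α) = P⁻¹ := by rw [hP, Real.rpow_neg ht0.le]
    rw [hPinv] at hkey
    have e1 : h * f t = f t^2 * P / (2*C₀) := by rw [hh]; ring
    have e2 : C₀ * P⁻¹ * h^2 = f t^2 * P / (4*C₀) := by
      rw [hh]; field_simp; ring
    rw [e1, e2] at hkey
    have e3 : f t^2 * P / (2*C₀) - f t^2 * P / (4*C₀) = f t^2 * P / (4*C₀) := by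
      field_simp; ring
    have h4 : f t^2 * P / (4*C₀) ≤ C₁ * (1+t)^β * (Real.log (1+t))^γ := by linarith
    have h5 : f t^2 * P ≤ C₁ * (1+t)^β * (Real.log (1+t))^γ * (4*C₀) :=
      (div_le_iff₀ (by positivity)).mp h4
    have h6 : f t^2 ≤ 4 * C₀ * C₁ * (1+t)^(β-α) * (Real.log (1+t))^γ := by
      have h7 : f t^2 ≤ C₁ * (1+t)^β * (Real.log (1+t))^γ * (4*C₀) / P :=
        (le_div_iff₀ hPpos).mpr h5
      have h8 : (1+t)^(β-α) = (1+t)^β / P := by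
        rw [hP, Real.rpow_sub ht0]
      rw [h8]
      calc f t^2 ≤ C₁ * (1+t)^β * (Real.log (1+t))^γ * (4*C₀) / P := h7
        _ = 4 * C₀ * C₁ * ((1+t)^β / P) * (Real.log (1+t))^γ := by ring
    -- conclude
    have hR0 : 0 ≤ 2 * Real.sqrt (C₀ * C₁) * (1+t)^((β-α)/2) * (Real.log (1+t))^(γ/2) := by
      positivity
    have hsq1 : ((1+t)^((β-α)/2))^2 = (1+t)^(β-α) := by
      rw [← Real.rpow_natCast ((1+t)^((β-α)/2)) 2, ← Real.rpow_mul ht0.le]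
      norm_num
    have hsq2 : ((Real.log (1+t))^(γ/2))^2 = (Real.log (1+t))^γ := by
      rw [← Real.rpow_natCast ((Real.log (1+t))^(γ/2)) 2, ← Real.rpow_mul hL0.le]
      norm_num
    have hsq3 : (Real.sqrt (C₀ * C₁))^2 = C₀ * C₁ := Real.sq_sqrt (by positivity)
    have hR2 : (2 * Real.sqrt (C₀ * C₁) * (1+t)^((β-α)/2) * (Real.log (1+t))^(γ/2))^2
        = 4 * C₀ * C₁ * (1+t)^(β-α) * (Real.log (1+t))^γ := by
      have h9 : (2 * Real.sqrt (C₀ * C₁) * (1+t)^((β-α)/2) * (Real.log (1+t))^(γ/2))^2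
          = 2^2 * (Real.sqrt (C₀ * C₁))^2 * ((1+t)^((β-α)/2))^2
          * ((Real.log (1+t))^(γ/2))^2 := by ring
      rw [h9, hsq1, hsq2, hsq3]
      ring
    have hfR : f t^2 ≤ (2 * Real.sqrt (C₀ * C₁) * (1+t)^((β-α)/2) * (Real.log (1+t))^(γ/2))^2 := by
      rw [hR2]; exact h6
    calc f t = Real.sqrt (f t ^ 2) := (Real.sqrt_sq hft0).symm
      _ ≤ Real.sqrt ((2 * Real.sqrt (C₀ * C₁) * (1+t)^((β-α)/2)
            * (Real.log (1+t))^(γ/2))^2) := Real.sqrt_le_sqrt hfR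
      _ = 2 * Real.sqrt (C₀ * C₁) * (1+t)^((β-α)/2) * (Real.log (1+t))^(γ/2) :=
          Real.sqrt_sq hR0
  · -- impossible case: f t is too large
    exfalso
    push_neg at hcase
    have hkeyB := key (δ * (1+t)) (by positivity) le_rfl
    have e3 : (1+t)^(-α) * (δ * (1+t))^2 = δ^2 * (1+t)^(2-α) := by
      have h1 : (1+t)^(-α) * (1+t)^(2:ℝ) = (1+t)^(2-α) := by
        rw [← Real.rpow_add ht0]; ring_nf
      have h2 : (1+t)^(2:ℝ) = (1+t)^(2:ℕ) := by
        rw [← Real.rpow_natCast (1+t) 2]; norm_num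
      calc (1+t)^(-α) * (δ * (1+t))^2 = δ^2 * ((1+t)^(-α) * (1+t)^(2:ℕ)) := by ring
        _ = δ^2 * ((1+t)^(-α) * (1+t)^(2:ℝ)) := by rw [h2]
        _ = δ^2 * (1+t)^(2-α) := by rw [h1]
    have e4 : (1+t) * (1+t)^(1-α) = (1+t)^(2-α) := by
      nth_rewrite 1 [← Real.rpow_one (1+t)]
      rw [← Real.rpow_add ht0]
      congr 1
      ring
    have hlarge : δ * (1+t) * (2 * C₀ * δ * (1+t)^(1-α)) < δ * (1+t) * f t :=
      mul_lt_mul_of_pos_left hcase (by positivity)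
    have e5 : δ * (1+t) * (2 * C₀ * δ * (1+t)^(1-α)) = 2 * C₀ * δ^2 * (1+t)^(2-α) := by
      calc δ * (1+t) * (2 * C₀ * δ * (1+t)^(1-α))
          = 2 * C₀ * δ^2 * ((1+t) * (1+t)^(1-α)) := by ring
        _ = 2 * C₀ * δ^2 * (1+t)^(2-α) := by rw [e4]
    have e6 : C₀ * (1+t)^(-α) * (δ * (1+t))^2 = C₀ * δ^2 * (1+t)^(2-α) := by
      rw [mul_assoc, e3]; ring
    rw [e6] at hkeyB
    rw [e5] at hlarge
    linarith
end

section
/- Let f : [0,∞) → [0,∞) be Lipschitz continuous with f'(t) ≤ C₀(1+t)^{-α} for some C₀ > 0 and 0 < α ≤ 2 (at points of differentiability), and assume f ∈ L¹(0,∞). Then f(t) = o(t^{-α/2}) as t → ∞. -/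
open MeasureTheory Real Filter Asymptotics

open Topology Set

lemma lip_mvt (f : ℝ → ℝ) (K : NNReal)
    (hf_lip : LipschitzOnWith K f (Set.Ici 0))
    {c s t : ℝ} (hs : 0 ≤ s) (hst : s ≤ t)
    (hd : ∀ u ∈ Set.Ioo s t, ∀ d : ℝ, HasDerivAt f d u → d ≤ c) :
    f t - f s ≤ c * (t - s) := by
  have hlipKst : f t - f s ≤ (K : ℝ) * (t - s) := by
    have := hf_lip.dist_le_mul t (le_trans hs hst) s hs
    rw [Real.dist_eq, Real.dist_eq] at this
    have h1 : f t - f s ≤ |f t - f s| := le_abs_self _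
    have h2 : |t - s| = t - s := abs_of_nonneg (by linarith)
    rw [h2] at this
    linarith
  by_cases hcK : (K : ℝ) ≤ c
  · calc f t - f s ≤ (K : ℝ) * (t - s) := hlipKst
      _ ≤ c * (t - s) := by nlinarith
  push_neg at hcK
  -- monotone function h
  set h : ℝ → ℝ := fun u => (K : ℝ) * max u 0 - f (max u 0) with hh
  have hmono : Monotone h := by
    intro u v huv
    have hu : (0:ℝ) ≤ max u 0 := le_max_right _ _
    have hv : (0:ℝ) ≤ max v 0 := le_max_right _ _
    have huv' : max u 0 ≤ max v 0 := max_le_max huv le_rfl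
    have := hf_lip.dist_le_mul (max v 0) hv (max u 0) hu
    rw [Real.dist_eq, Real.dist_eq] at this
    have h1 : f (max v 0) - f (max u 0) ≤ |f (max v 0) - f (max u 0)| := le_abs_self _
    have h2 : |max v 0 - max u 0| = max v 0 - max u 0 := abs_of_nonneg (by linarith)
    rw [h2] at this
    simp only [hh]
    linarith
  have hcontf : ContinuousOn f (Set.Ici 0) := hf_lip.continuousOn
  have hconth : Continuous h := by
    have hmax : Continuous fun u : ℝ => max u 0 := continuous_id.max continuous_const
    have : Continuous fun u : ℝ => f (max u 0) :=
      hcontf.comp_continuous hmax (fun x => Set.mem_Ici.mpr (le_max_right _ _))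
    exact ((continuous_const.mul hmax).sub this)
  set H : StieltjesFunction ℝ := ⟨h, hmono, fun x => hconth.continuousWithinAt⟩ with hH
  have hae : ∀ᵐ u, u ∈ Set.Ioo s t →
      ENNReal.ofReal ((K : ℝ) - c) ≤ H.measure.rnDeriv volume u := by
    filter_upwards [H.ae_hasDerivAt] with u hu hmem
    have hu0 : 0 < u := lt_of_le_of_lt hs hmem.1
    -- h agrees with K*v - f v near u
    have heq : (fun v => (K : ℝ) * v - f v) =ᶠ[nhds u] H := by
      filter_upwards [eventually_gt_nhds hu0] with v hv
      show (K : ℝ) * v - f v = h v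
      rw [hh]
      simp [max_eq_left hv.le]
    have hderivH : HasDerivAt (fun v => (K : ℝ) * v - f v)
        (H.measure.rnDeriv volume u).toReal u := hu.congr_of_eventuallyEq heq
    have hderivf : HasDerivAt f ((K : ℝ) - (H.measure.rnDeriv volume u).toReal) u := by
      have h2 : HasDerivAt (fun v : ℝ => (K : ℝ) * v) (K : ℝ) u := by
        simpa using (hasDerivAt_id u).const_mul (K : ℝ)
      have := h2.sub hderivH
      have e : ((fun v => (K : ℝ) * v) - fun v => (K : ℝ) * v - f v) = f := by
        ext v
        simp
      rwa [e] at this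
    have hle := hd u hmem _ hderivf
    have : (K : ℝ) - c ≤ (H.measure.rnDeriv volume u).toReal := by linarith
    rcases eq_or_ne (H.measure.rnDeriv volume u) ⊤ with htop | htop
    · simp [htop]
    · exact ENNReal.ofReal_le_of_le_toReal this |>.trans_eq rfl
  have hbound : ENNReal.ofReal ((K : ℝ) - c) * volume (Set.Ioo s t)
      ≤ H.measure (Set.Ioc s t) := by
    calc ENNReal.ofReal ((K : ℝ) - c) * volume (Set.Ioo s t)
        = ∫⁻ _ in Set.Ioo s t, ENNReal.ofReal ((K : ℝ) - c) := by
          rw [setLIntegral_const]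
      _ ≤ ∫⁻ u in Set.Ioo s t, H.measure.rnDeriv volume u := by
          refine lintegral_mono_ae ?_
          exact (ae_restrict_iff' measurableSet_Ioo).2 hae
      _ ≤ ∫⁻ u in Set.Ioc s t, H.measure.rnDeriv volume u :=
          lintegral_mono_set Set.Ioo_subset_Ioc_self
      _ ≤ H.measure (Set.Ioc s t) := Measure.setLIntegral_rnDeriv_le _
  rw [H.measure_Ioc, Real.volume_Ioo] at hbound
  have hts : 0 ≤ ((K:ℝ) - c) * (t - s) := by nlinarith
  rw [← ENNReal.ofReal_mul (by linarith)] at hbound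
  have hHst : h s ≤ h t := hmono hst
  have := (ENNReal.ofReal_le_ofReal_iff (by linarith)).1 hbound
  have hhs : h s = (K : ℝ) * s - f s := by rw [hh]; simp [max_eq_left hs]
  have hht : h t = (K : ℝ) * t - f t := by rw [hh]; simp [max_eq_left (hs.trans hst)]
  have hHt : (H : ℝ → ℝ) t = h t := rfl
  have hHs : (H : ℝ → ℝ) s = h s := rfl
  rw [hHt, hHs, hhs, hht] at this
  nlinarith


/-- Area inequality, second part: a nonnegative Lipschitz integrable function
with derivative bound `f'(t) ≤ C₀(1+t)^{-α}`, `0 < α ≤ 2`, satisfies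
`f(t) = o(t^{-α/2})` as `t → ∞`. -/
theorem area_inequality_littleO
    (f : ℝ → ℝ) (K : NNReal) (C₀ α : ℝ)
    (hf_lip : LipschitzOnWith K f (Set.Ici 0))
    (hf_nonneg : ∀ t : ℝ, 0 ≤ t → 0 ≤ f t)
    (hC₀ : 0 < C₀) (hα₁ : 0 < α) (hα₂ : α ≤ 2)
    (hderiv : ∀ t : ℝ, 0 ≤ t → ∀ d : ℝ, HasDerivAt f d t → d ≤ C₀ * (1 + t) ^ (-α))
    (hint : IntegrableOn f (Set.Ioi 0)) :
    (fun t : ℝ => f t) =o[atTop] fun t : ℝ => t ^ (-α / 2) := by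

  rw [isLittleO_iff]
  intro ε hε
  by_contra hcon
  rw [Filter.not_eventually] at hcon
  have hII : ∀ a b : ℝ, 0 ≤ a → a ≤ b → IntervalIntegrable f volume a b := by
    intro a b ha hab
    rw [intervalIntegrable_iff_integrableOn_Ioc_of_le hab]
    exact hint.mono_set (fun x hx => lt_of_le_of_lt ha hx.1)
  set c₀ : ℝ := min (ε ^ 2 / (16 * C₀)) (ε / 4) with hc₀
  have hc₀pos : 0 < c₀ := lt_min (by positivity) (by positivity)
  have h1 : Tendsto (fun x : ℝ => ∫ u in (0:ℝ)..x, f u) atTop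
      (𝓝 (∫ u in Set.Ioi 0, f u)) :=
    intervalIntegral_tendsto_integral_Ioi 0 hint tendsto_id
  have h2 : Tendsto (fun x : ℝ => ∫ u in (0:ℝ)..(x/2), f u) atTop
      (𝓝 (∫ u in Set.Ioi 0, f u)) :=
    intervalIntegral_tendsto_integral_Ioi 0 hint (tendsto_id.atTop_div_const two_pos)
  have h3 : Tendsto (fun x : ℝ => (∫ u in (0:ℝ)..x, f u) - ∫ u in (0:ℝ)..(x/2), f u)
      atTop (𝓝 0) := by simpa using h1.sub h2
  have hev : ∀ᶠ t : ℝ in atTop,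
      1 ≤ t ∧ (∫ u in (0:ℝ)..t, f u) - (∫ u in (0:ℝ)..(t/2), f u) < c₀ :=
    (eventually_ge_atTop 1).and (h3.eventually_lt_const hc₀pos)
  obtain ⟨t, hnot, ht1, htint⟩ := (hcon.and_eventually hev).exists
  push_neg at hnot
  have ht0 : (0:ℝ) < t := lt_of_lt_of_le one_pos ht1
  have hft : ε * t ^ (-α / 2) < f t := by
    have h1' : ‖t ^ (-α / 2)‖ = t ^ (-α / 2) :=
      Real.norm_of_nonneg (Real.rpow_nonneg ht0.le _)
    have h2' : ‖f t‖ = f t := Real.norm_of_nonneg (hf_nonneg t ht0.le)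
    rwa [h1', h2'] at hnot
  have htpow : 0 < t ^ (-α / 2) := Real.rpow_pos_of_pos ht0 _
  set δ : ℝ := min (t / 2) (ε * t ^ (α / 2) / (8 * C₀)) with hδ
  have hδpos : 0 < δ := lt_min (by linarith) (by positivity)
  have hδle : δ ≤ t / 2 := min_le_left _ _
  -- pointwise lower bound on [t-δ, t]
  have hlow : ∀ s ∈ Set.Icc (t - δ) t, f t / 2 ≤ f s := by
    intro s hs
    have hs2 : t / 2 ≤ s := by
      have := hs.1; linarith
    have hs0 : 0 < s := by linarith
    have hmvt := lip_mvt f K hf_lip (c := C₀ * (t / 2) ^ (-α)) hs0.le hs.2 ?_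
    · have hCpos : 0 ≤ C₀ * (t / 2) ^ (-α) := by positivity
      have hts : t - s ≤ δ := by have := hs.1; linarith
      have step1 : C₀ * (t / 2) ^ (-α) * (t - s) ≤ C₀ * (t / 2) ^ (-α) * δ :=
        mul_le_mul_of_nonneg_left hts hCpos
      have hδ2 : δ ≤ ε * t ^ (α / 2) / (8 * C₀) := min_le_right _ _
      have hhalf : (t / 2) ^ (-α) ≤ 4 * t ^ (-α) := by
        have hmr : (t / 2) ^ (-α) = t ^ (-α) * (1/2 : ℝ) ^ (-α) := by
          rw [show t / 2 = t * (1/2 : ℝ) by ring, Real.mul_rpow ht0.le (by norm_num)]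
        have h12 : ((1:ℝ)/2) ^ (-α) = 2 ^ α := by
          rw [Real.div_rpow zero_le_one (by norm_num : (0:ℝ) ≤ 2), Real.one_rpow,
            Real.rpow_neg (by norm_num : (0:ℝ) ≤ 2), one_div, inv_inv]
        have h2α : (2:ℝ) ^ α ≤ 4 := by
          have := Real.rpow_le_rpow_of_exponent_le one_le_two hα₂
          rwa [show ((2:ℝ)) ^ (2:ℝ) = 4 by
            rw [show (2:ℝ) = ((2:ℕ):ℝ) by norm_num, Real.rpow_natCast]; norm_num] at this
        have htα : 0 ≤ t ^ (-α) := Real.rpow_nonneg ht0.le _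
        rw [hmr, h12]
        nlinarith
      have hone : t ^ (-α) * t ^ (α / 2) = t ^ (-α / 2) := by
        rw [← Real.rpow_add ht0]; ring_nf
      have step2 : C₀ * (t / 2) ^ (-α) * δ ≤ f t / 2 := by
        have e1 : C₀ * (t / 2) ^ (-α) * δ ≤ C₀ * (4 * t ^ (-α)) * (ε * t ^ (α / 2) / (8 * C₀)) := by
          have htα : 0 ≤ (t/2) ^ (-α) := Real.rpow_nonneg (by linarith) _
          exact mul_le_mul (mul_le_mul_of_nonneg_left hhalf hC₀.le) hδ2 hδpos.le
            (by positivity)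
        have e2 : C₀ * (4 * t ^ (-α)) * (ε * t ^ (α / 2) / (8 * C₀)) = ε * t ^ (-α/2) / 2 := by
          rw [← hone]
          have hC : C₀ * C₀⁻¹ = 1 := mul_inv_cancel₀ hC₀.ne'
          linear_combination (ε * t ^ (-α) * t ^ (α / 2) / 2) * hC
        have e3 : ε * t ^ (-α/2) / 2 ≤ f t / 2 := by linarith
        linarith
      linarith
    · intro u hu d hd
      have hu0 : 0 ≤ u := by have := hu.1; linarith
      have h4 := hderiv u hu0 d hd
      have hmono : (1 + u) ^ (-α) ≤ (t / 2) ^ (-α) := by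
        apply Real.rpow_le_rpow_of_nonpos (by linarith) (by have := hu.1; linarith)
          (by linarith)
      nlinarith [h4, hmono, hC₀]
  -- integral lower bound
  have htδ : t / 2 ≤ t - δ := by linarith
  have hIab : IntervalIntegrable f volume (t/2) (t - δ) := hII _ _ (by linarith) htδ
  have hIbc : IntervalIntegrable f volume (t - δ) t := hII _ _ (by linarith) (by linarith)
  have hsplit : (∫ u in (t/2)..(t-δ), f u) + (∫ u in (t-δ)..t, f u)
      = ∫ u in (t/2)..t, f u := intervalIntegral.integral_add_adjacent_intervals hIab hIbc
  have hA : 0 ≤ ∫ u in (t/2)..(t-δ), f u :=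
    intervalIntegral.integral_nonneg htδ (fun u hu => hf_nonneg u (by
      have := hu.1; linarith))
  have hB : δ * (f t / 2) ≤ ∫ u in (t-δ)..t, f u := by
    have hconst : (∫ _ in (t-δ)..t, f t / 2) = δ * (f t / 2) := by
      rw [intervalIntegral.integral_const, smul_eq_mul]; ring
    rw [← hconst]
    exact intervalIntegral.integral_mono_on (by linarith) intervalIntegrable_const hIbc
      (fun u hu => hlow u hu)
  have hGt : δ * (f t / 2) ≤ ∫ u in (t/2)..t, f u := by linarith
  have heq : (∫ u in (t/2)..t, f u)
      = (∫ u in (0:ℝ)..t, f u) - ∫ u in (0:ℝ)..(t/2), f u :=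
    (intervalIntegral.integral_interval_sub_left (hII 0 t (le_refl 0) ht0.le)
      (hII 0 (t/2) (le_refl 0) (by linarith))).symm
  have hfinal : c₀ ≤ δ * (f t / 2) := by
    rcases le_total (t / 2) (ε * t ^ (α / 2) / (8 * C₀)) with hmin | hmin
    · have hδeq : δ = t / 2 := min_eq_left hmin
      have hmul : t * t ^ (-α / 2) = t ^ (1 - α / 2) := by
        rw [show (1 - α/2) = 1 + (-(α/2)) by ring, Real.rpow_add ht0, Real.rpow_one, neg_div]
      have hge1 : (1:ℝ) ≤ t ^ (1 - α / 2) := by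
        have := Real.rpow_le_rpow_of_exponent_le ht1 (show (0:ℝ) ≤ 1 - α/2 by linarith)
        rwa [Real.rpow_zero] at this
      refine le_trans (min_le_right _ _) ?_
      calc ε / 4 = ε * 1 / 4 := by ring
        _ ≤ ε * t ^ (1 - α/2) / 4 := by
            have := mul_le_mul_of_nonneg_left hge1 hε.le
            linarith
        _ = (t/2) * (ε * t ^ (-α/2) / 2) := by rw [← hmul]; ring
        _ ≤ (t/2) * (f t / 2) := by
            have : ε * t ^ (-α/2) / 2 ≤ f t / 2 := by linarith
            exact mul_le_mul_of_nonneg_left this (by linarith)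
        _ = δ * (f t / 2) := by rw [hδeq]
    · have hδeq : δ = ε * t ^ (α / 2) / (8 * C₀) := min_eq_right hmin
      have hone : t ^ (α / 2) * t ^ (-α / 2) = 1 := by
        rw [← Real.rpow_add ht0, show α / 2 + -α / 2 = 0 by ring, Real.rpow_zero]
      have htp2 : 0 < t ^ (α / 2) := Real.rpow_pos_of_pos ht0 _
      refine le_trans (min_le_left _ _) ?_
      calc ε ^ 2 / (16 * C₀) = (ε * t ^ (α/2) / (8 * C₀)) * (ε * t ^ (-α/2) / 2) := by
            rw [div_mul_div_comm,
              show ε * t ^ (α/2) * (ε * t ^ (-α/2)) = ε ^ 2 * (t ^ (α/2) * t ^ (-α/2)) by ring,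
              hone, mul_one]
            ring
        _ ≤ (ε * t ^ (α/2) / (8 * C₀)) * (f t / 2) := by
            have h5 : ε * t ^ (-α/2) / 2 ≤ f t / 2 := by linarith
            exact mul_le_mul_of_nonneg_left h5 (by positivity)
        _ = δ * (f t / 2) := by rw [hδeq]
  rw [heq] at hGt
  linarith
end
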